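/- For a finite set A in an abelian group, |A² + Δ(A)| = Σ_{x ∈ A−A} |A + A_x|, where A_x = A ∩ (A−x). -/

import Mathlib

open Finset Pointwise

theorem stmt_5 {G : Type*} [AddCommGroup G] [DecidableEq G] (A : Finset G) :
    ((A ×ˢ A) + A.image fun a => (a, a)).card
      = ∑ x ∈ A - A, (A + (A ∩ A.image fun a => a - x)).card := by
  rw [Finset.card_eq_sum_card_fiberwise (f := fun p : G × G => p.1 - p.2) (t := A - A) ?memt]
  case memt =>
    intro p hp
    simp only [Finset.mem_coe, Finset.mem_add, Finset.mem_product, Finset.mem_image] at hp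
    obtain ⟨q, ⟨hq1, hq2⟩, r, ⟨c, hc, rfl⟩, rfl⟩ := hp
    show q.1 + c - (q.2 + c) ∈ A - A
    have : q.1 + c - (q.2 + c) = q.1 - q.2 := by abel
    rw [this]
    exact Finset.sub_mem_sub hq1 hq2
  refine Finset.sum_congr rfl fun x hx => ?_
  symm
  apply Finset.card_bij (fun t _ => (t + x, t))
  · intro t ht
    simp only [Finset.mem_add, Finset.mem_inter, Finset.mem_image] at ht
    obtain ⟨u, hu, b, ⟨hbA, a, ha, hab⟩, rfl⟩ := ht
    have hbx : b + x ∈ A := by rw [← hab]; simpa using ha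
    simp only [Finset.mem_filter, Finset.mem_add, Finset.mem_product, Finset.mem_image]
    refine ⟨⟨(b + x, b), ⟨hbx, hbA⟩, (u, u), ⟨u, hu, rfl⟩, ?_⟩, by abel⟩
    simp [Prod.ext_iff]; constructor <;> abel
  · intro t₁ _ t₂ _ h
    exact congrArg Prod.snd h
  · intro p hp
    simp only [Finset.mem_filter, Finset.mem_add, Finset.mem_product, Finset.mem_image] at hp
    obtain ⟨⟨q, ⟨hq1, hq2⟩, r, ⟨c, hc, rfl⟩, rfl⟩, hdiff⟩ := hp
    simp only [Prod.fst_add, Prod.snd_add] at hdiff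
    have hx : q.1 - q.2 = x := by
      have : q.1 + c - (q.2 + c) = q.1 - q.2 := by abel
      rwa [this] at hdiff
    refine ⟨q.2 + c, ?_, ?_⟩
    · simp only [Finset.mem_add, Finset.mem_inter, Finset.mem_image]
      exact ⟨c, hc, q.2, ⟨hq2, q.1, hq1, by rw [← hx]; abel⟩, by abel⟩
    · have : q.1 = q.2 + x := by rw [← hx]; abel
      simp [Prod.ext_iff, this]; abel
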